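/- arXiv:1512.07219 — 4 statements merged into one kernel-verified Lean document; each statement's English description precedes it below -/
import Mathlib

section
/- Let $H\in(\tfrac23,1)$. There exists $\delta\in(0,1)$ (depending only on $H$) such that for all $a,b,c> 0$, $(a+b)^{2H}(b+c)^{2H} - \mu_H(a,\,a+b,\,b+c)^2 \;\ge\; \delta\,\big((a+b)^{2H}c^{2H} + (b+c)^{2H}a^{2H}\big)$. (Here $a=s_2-s_1$, $b=t_1-s_2$, $c=t_2-t_1$ corresponds to the ordering $s_1<s_2<t_1<t_2$, and the left-hand side is the determinant of the covariance matrix of the fractional Brownian increments $(B_{t_1}-B_{s_1},B_{t_2}-B_{s_2})$.) -/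
namespace FBMLND
open Real Set MeasureTheory

noncomputable def Fk (γ s t x : ℝ) : ℝ := max (x - s) 0 ^ γ - max (x - t) 0 ^ γ

noncomputable def CC (γ : ℝ) : ℝ := ∫ x : ℝ, Fk γ 0 1 x ^ 2

variable {γ : ℝ}

lemma continuous_Fk (hγ : 0 < γ) (s t : ℝ) : Continuous (Fk γ s t) := by
  unfold Fk
  have h1 : Continuous fun x : ℝ => max (x - s) 0 ^ γ :=
    ((continuous_id.sub continuous_const).max continuous_const).rpow_const
      (fun x => Or.inr hγ.le)
  have h2 : Continuous fun x : ℝ => max (x - t) 0 ^ γ :=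
    ((continuous_id.sub continuous_const).max continuous_const).rpow_const
      (fun x => Or.inr hγ.le)
  exact h1.sub h2

lemma sq_rpow {p : ℝ} {y : ℝ} (hy : 0 ≤ y) : (y ^ p) ^ 2 = y ^ (2 * p) := by
  rw [← Real.rpow_natCast (y ^ p) 2, ← Real.rpow_mul hy]
  norm_num [mul_comm]

lemma Fk_zero_of_le (hγ : 0 < γ) {s t x : ℝ} (hs : s ≤ t) (hx : x ≤ s) : Fk γ s t x = 0 := by
  unfold Fk
  rw [max_eq_right (by linarith), max_eq_right (by linarith), Real.zero_rpow hγ.ne', sub_self]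

lemma Fk_nonneg (hγ : 0 < γ) {s t : ℝ} (hst : s ≤ t) (x : ℝ) : 0 ≤ Fk γ s t x := by
  unfold Fk
  have h : max (x - t) 0 ≤ max (x - s) 0 := max_le_max (by linarith) le_rfl
  have := Real.rpow_le_rpow (le_max_right _ 0) h hγ.le
  linarith

lemma bernoulli_bound (hγ : 0 < γ) (hγ1 : γ ≤ 1) {u : ℝ} (hu : 1 ≤ u) :
    (u + 1) ^ γ - u ^ γ ≤ γ * u ^ (γ - 1) := by
  have hu0 : 0 < u := by linarith
  have h1 : u + 1 = u * (1 + 1/u) := by field_simp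
  have h2 : (u + 1) ^ γ = u ^ γ * (1 + 1/u) ^ γ := by
    rw [h1, Real.mul_rpow hu0.le (by positivity)]
  have h3 : (1 + 1/u) ^ γ ≤ 1 + γ * (1/u) :=
    rpow_one_add_le_one_add_mul_self (by have h0 : (0:ℝ) ≤ 1/u := by positivity
                                         linarith) hγ.le hγ1
  have h4 : u ^ γ * (1 + γ * (1/u)) = u ^ γ + γ * u ^ (γ - 1) := by
    rw [Real.rpow_sub hu0, Real.rpow_one]
    field_simp
  nlinarith [Real.rpow_pos_of_pos hu0 γ]

lemma base_integrable (hγ : 0 < γ) (hγ2 : γ < 1/2) :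
    Integrable (fun x => Fk γ 0 1 x ^ 2) := by
  have hcont : Continuous fun x => Fk γ 0 1 x ^ 2 := (continuous_Fk hγ 0 1).pow 2
  have h1 : IntegrableOn (fun x => Fk γ 0 1 x ^ 2) (Iic (0:ℝ)) := by
    refine (integrableOn_zero (s := Iic (0:ℝ))).congr_fun ?_ measurableSet_Iic
    intro x hx
    simp only [Fk_zero_of_le hγ zero_le_one (mem_Iic.mp hx), Pi.zero_apply]
    norm_num
  have h2 : IntegrableOn (fun x => Fk γ 0 1 x ^ 2) (Ioc (0:ℝ) 2) := hcont.integrableOn_Ioc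
  have h3 : IntegrableOn (fun x => Fk γ 0 1 x ^ 2) (Ioi (2:ℝ)) := by
    have hint : IntegrableOn (fun x : ℝ => 4 * x ^ (2*γ - 2)) (Ioi (2:ℝ)) :=
      (integrableOn_Ioi_rpow_of_lt (by linarith) two_pos).const_mul 4
    refine Integrable.mono hint hcont.aestronglyMeasurable.restrict ?_
    filter_upwards [ae_restrict_mem measurableSet_Ioi] with x hx
    have hx2 : (2:ℝ) < x := hx
    have hx0 : (0:ℝ) < x := by linarith
    have hFk : Fk γ 0 1 x = x ^ γ - (x-1) ^ γ := by
      unfold Fk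
      rw [max_eq_left (by linarith), max_eq_left (by linarith)]
      norm_num
    have hb : x ^ γ - (x-1) ^ γ ≤ γ * (x-1) ^ (γ - 1) := by
      have := bernoulli_bound hγ (by linarith) (by linarith : (1:ℝ) ≤ x - 1)
      have he : (x - 1) + 1 = x := by ring
      rw [he] at this
      exact this
    have hmono : (x-1) ^ (γ-1) ≤ (x/2) ^ (γ-1) :=
      Real.rpow_le_rpow_of_nonpos (by positivity) (by linarith) (by linarith)
    have hhalf : (x/2) ^ (γ-1) ≤ 2 * x ^ (γ-1) := by
      rw [Real.div_rpow hx0.le (by norm_num)]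
      rw [div_le_iff₀ (by positivity)]
      have h2γ : (1:ℝ)/2 ≤ (2:ℝ) ^ (γ-1) := by
        have : (2:ℝ) ^ (-1:ℝ) ≤ (2:ℝ) ^ (γ-1) :=
          Real.rpow_le_rpow_of_exponent_le (by norm_num) (by linarith)
        rwa [Real.rpow_neg_one, show ((2:ℝ))⁻¹ = 1/2 by norm_num] at this
      nlinarith [Real.rpow_pos_of_pos hx0 (γ-1)]
    have hge : 0 ≤ Fk γ 0 1 x := Fk_nonneg hγ zero_le_one x
    have hle : Fk γ 0 1 x ≤ 2 * x ^ (γ-1) := by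
      rw [hFk]
      have hγ1 : γ * (x-1)^(γ-1) ≤ (x-1)^(γ-1) := by
        nlinarith [Real.rpow_pos_of_pos (by linarith : (0:ℝ) < x - 1) (γ-1)]
      linarith
    have hsq : Fk γ 0 1 x ^ 2 ≤ 4 * x ^ (2*γ-2) := by
      have : Fk γ 0 1 x ^ 2 ≤ (2 * x ^ (γ-1)) ^ 2 := by nlinarith
      have he : (2 * x ^ (γ-1)) ^ 2 = 4 * x ^ (2*γ-2) := by
        rw [mul_pow, sq_rpow hx0.le]
        norm_num
        ring_nf
      linarith [he ▸ this]
    rw [Real.norm_eq_abs, Real.norm_eq_abs, abs_of_nonneg (by positivity : (0:ℝ) ≤ Fk γ 0 1 x ^ 2),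
      abs_of_nonneg (by positivity : (0:ℝ) ≤ 4 * x ^ (2*γ-2))]
    exact hsq
  have h23 : IntegrableOn (fun x => Fk γ 0 1 x ^ 2) (Ioi (0:ℝ)) := by
    rw [← Set.Ioc_union_Ioi_eq_Ioi (by norm_num : (0:ℝ) ≤ 2)]
    exact h2.union h3
  have : IntegrableOn (fun x => Fk γ 0 1 x ^ 2) univ := by
    rw [← Set.Iic_union_Ioi (a := (0:ℝ))]
    exact h1.union h23
  exact integrableOn_univ.mp this

end FBMLND

namespace FBMLND2
open Real Set MeasureTheory FBMLND
variable {γ : ℝ}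

lemma Fk_scale (hγ : 0 < γ) {s t : ℝ} (h : s < t) (x : ℝ) :
    Fk γ s t x = (t - s) ^ γ * Fk γ 0 1 ((x - s)/(t - s)) := by
  have hτ : 0 < t - s := sub_pos.2 h
  unfold Fk
  rw [mul_sub]
  congr 1
  · rw [← Real.mul_rpow hτ.le (le_max_right _ 0), mul_max_of_nonneg _ _ hτ.le]
    congr 2
    all_goals field_simp
    all_goals ring
  · rw [← Real.mul_rpow hτ.le (le_max_right _ 0), mul_max_of_nonneg _ _ hτ.le]
    congr 2
    all_goals field_simp
    all_goals ring

lemma integrable_Fk_sq (hγ : 0 < γ) (hγ2 : γ < 1/2) {s t : ℝ} (h : s ≤ t) :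
    Integrable (fun x => Fk γ s t x ^ 2) := by
  rcases eq_or_lt_of_le h with rfl | hlt
  · have : (fun x => Fk γ s s x ^ 2) = fun _ => (0:ℝ) := by
      funext x; unfold Fk; norm_num
    rw [this]; exact integrable_zero _ _ _
  · have hτ : 0 < t - s := sub_pos.2 hlt
    have heq : (fun x => Fk γ s t x ^ 2)
        = fun x => ((t-s)^γ)^2 * ((fun y => Fk γ 0 1 (y/(t-s)) ^ 2) (x - s)) := by
      funext x
      rw [Fk_scale hγ hlt x, mul_pow]
    rw [heq]
    exact (((base_integrable hγ hγ2).comp_div hτ.ne').comp_sub_right s).const_mul _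

lemma integral_Fk_sq (hγ : 0 < γ) (hγ2 : γ < 1/2) {s t : ℝ} (h : s ≤ t) :
    ∫ x : ℝ, Fk γ s t x ^ 2 = (t - s) ^ (2*γ + 1) * CC γ := by
  rcases eq_or_lt_of_le h with rfl | hlt
  · have h0 : (fun x => Fk γ s s x ^ 2) = fun _ => (0:ℝ) := by
      funext x; unfold Fk; norm_num
    rw [h0, integral_zero, sub_self, Real.zero_rpow (by positivity : 2*γ+1 ≠ 0), zero_mul]
  · have hτ : 0 < t - s := sub_pos.2 hlt
    have heq : (fun x => Fk γ s t x ^ 2)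
        = fun x => ((t-s)^γ)^2 * ((fun y => Fk γ 0 1 (y/(t-s)) ^ 2) (x - s)) := by
      funext x
      rw [Fk_scale hγ hlt x, mul_pow]
    rw [heq, integral_const_mul, integral_sub_right_eq_self (fun y => Fk γ 0 1 (y/(t-s)) ^ 2) s,
      MeasureTheory.Measure.integral_comp_div (fun y => Fk γ 0 1 y ^ 2) (t-s)]
    rw [abs_of_pos hτ, sq_rpow hτ.le, smul_eq_mul, ← mul_assoc]
    have hpow : (t-s) ^ (2*γ) * (t-s) = (t-s) ^ (2*γ+1) := by
      rw [show (2*γ+1) = 2*γ + 1 by ring, Real.rpow_add hτ, Real.rpow_one]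
    rw [hpow]
    rfl

end FBMLND2

namespace FBMLND3
open Real Set MeasureTheory FBMLND FBMLND2
variable {γ : ℝ}

lemma CC_ge (hγ : 0 < γ) (hγ2 : γ < 1/2) : 1/(2*γ+1) ≤ CC γ := by
  have hbase := base_integrable hγ hγ2
  have h1 : ∫ x in Ioc (0:ℝ) 1, Fk γ 0 1 x ^ 2 ≤ CC γ :=
    setIntegral_le_integral hbase (Filter.Eventually.of_forall fun x => sq_nonneg _)
  have h2 : ∫ x in Ioc (0:ℝ) 1, Fk γ 0 1 x ^ 2 = ∫ x in Ioc (0:ℝ) 1, x ^ (2*γ) := by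
    refine setIntegral_congr_fun measurableSet_Ioc (fun x hx => ?_)
    have hx1 : 0 < x := hx.1
    have hx2 : x ≤ 1 := hx.2
    have : Fk γ 0 1 x = x ^ γ := by
      unfold Fk
      rw [sub_zero, max_eq_left hx1.le, max_eq_right (by linarith), Real.zero_rpow hγ.ne',
        sub_zero]
    rw [this, sq_rpow hx1.le]
  have h3 : ∫ x in Ioc (0:ℝ) 1, x ^ (2*γ) = 1/(2*γ+1) := by
    rw [← intervalIntegral.integral_of_le zero_le_one,
      integral_rpow (Or.inl (by linarith : (-1:ℝ) < 2*γ))]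
    rw [Real.one_rpow, Real.zero_rpow (by positivity : 2*γ+1 ≠ 0)]
    norm_num
  rw [h2, h3] at h1
  exact h1

lemma CC_pos (hγ : 0 < γ) (hγ2 : γ < 1/2) : 0 < CC γ :=
  lt_of_lt_of_le (by positivity) (CC_ge hγ hγ2)

lemma integral_Fk_mul (hγ : 0 < γ) (hγ2 : γ < 1/2) {a b c : ℝ}
    (ha : 0 < a) (hb : 0 < b) (hc : 0 < c) :
    Integrable (fun x => Fk γ 0 (a+b) x * Fk γ a (a+b+c) x) ∧
    ∫ x : ℝ, Fk γ 0 (a+b) x * Fk γ a (a+b+c) x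
      = (1/2) * ((a+b+c)^(2*γ+1) + b^(2*γ+1) - a^(2*γ+1) - c^(2*γ+1)) * CC γ := by
  have key : (fun x => Fk γ 0 (a+b) x * Fk γ a (a+b+c) x)
      = fun x => (1/2) * (Fk γ 0 (a+b+c) x ^ 2 + Fk γ a (a+b) x ^ 2
          - Fk γ 0 a x ^ 2 - Fk γ (a+b) (a+b+c) x ^ 2) := by
    funext x; unfold Fk; ring
  have iT : Integrable (fun x => Fk γ 0 (a+b+c) x ^ 2) := integrable_Fk_sq hγ hγ2 (by linarith)
  have ib : Integrable (fun x => Fk γ a (a+b) x ^ 2) := integrable_Fk_sq hγ hγ2 (by linarith)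
  have ia : Integrable (fun x => Fk γ 0 a x ^ 2) := integrable_Fk_sq hγ hγ2 (by linarith)
  have ic : Integrable (fun x => Fk γ (a+b) (a+b+c) x ^ 2) := integrable_Fk_sq hγ hγ2 (by linarith)
  constructor
  · rw [key]
    exact ((((iT.add ib).sub ia).sub ic).const_mul _)
  · have iAB : Integrable (fun x => Fk γ 0 (a+b+c) x ^ 2 + Fk γ a (a+b) x ^ 2) := iT.add ib
    have iABC : Integrable
        (fun x => Fk γ 0 (a+b+c) x ^ 2 + Fk γ a (a+b) x ^ 2 - Fk γ 0 a x ^ 2) := iAB.sub ia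
    rw [key, integral_const_mul, integral_sub iABC ic,
      integral_sub iAB ia, integral_add iT ib,
      integral_Fk_sq hγ hγ2 (by linarith : (0:ℝ) ≤ a+b+c),
      integral_Fk_sq hγ hγ2 (by linarith : a ≤ a+b),
      integral_Fk_sq hγ hγ2 (by linarith : (0:ℝ) ≤ a),
      integral_Fk_sq hγ hγ2 (by linarith : a+b ≤ a+b+c)]
    rw [sub_zero, sub_zero, show a+b-a = b by ring, show a+b+c-(a+b) = c by ring]
    ring

end FBMLND3

namespace FBMLND4
open Real Set MeasureTheory FBMLND FBMLND2 FBMLND3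
variable {γ : ℝ}

lemma core (hγ : 0 < γ) (hγ2 : γ < 1/2) {a b c : ℝ} (ha : 0 < a) (hb : 0 < b) (hc : 0 < c) :
    (1/((2*γ+1) * CC γ)) * ((b+c)^(2*γ+1) * a^(2*γ+1)) ≤
      (a+b)^(2*γ+1) * (b+c)^(2*γ+1)
        - ((1/2) * ((a+b+c)^(2*γ+1) + b^(2*γ+1) - a^(2*γ+1) - c^(2*γ+1)))^2 := by
  have hC : 0 < CC γ := CC_pos hγ hγ2
  have hα : (0:ℝ) < 2*γ+1 := by linarith
  set A := (a+b)^(2*γ+1) with hA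
  set B := (b+c)^(2*γ+1) with hB
  set M := (1/2) * ((a+b+c)^(2*γ+1) + b^(2*γ+1) - a^(2*γ+1) - c^(2*γ+1)) with hM
  have hApos : 0 < A := Real.rpow_pos_of_pos (by linarith) _
  have hBpos : 0 < B := Real.rpow_pos_of_pos (by linarith) _
  have i1 : Integrable (fun x => Fk γ 0 (a+b) x ^ 2) := integrable_Fk_sq hγ hγ2 (by linarith)
  have i2 : Integrable (fun x => Fk γ a (a+b+c) x ^ 2) := integrable_Fk_sq hγ hγ2 (by linarith)
  obtain ⟨i12, hI12⟩ := integral_Fk_mul hγ hγ2 ha hb hc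
  rw [← hM] at hI12
  have hI1 : ∫ x : ℝ, Fk γ 0 (a+b) x ^ 2 = A * CC γ := by
    rw [integral_Fk_sq hγ hγ2 (by linarith : (0:ℝ) ≤ a+b), sub_zero]
  have hI2 : ∫ x : ℝ, Fk γ a (a+b+c) x ^ 2 = B * CC γ := by
    rw [integral_Fk_sq hγ hγ2 (by linarith : a ≤ a+b+c), show a+b+c-a = b+c by ring]
  have hz : ∀ x ∈ Iic a, Fk γ a (a+b+c) x = 0 := fun x hx =>
    Fk_zero_of_le hγ (by linarith) hx
  have e2 : ∫ x in Ioi a, Fk γ a (a+b+c) x ^ 2 = B * CC γ := by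
    have hsplit := intervalIntegral.integral_Iic_add_Ioi (b := a) i2.integrableOn i2.integrableOn
    have h0 : ∫ x in Iic a, Fk γ a (a+b+c) x ^ 2 = 0 := by
      rw [setIntegral_congr_fun measurableSet_Iic
        (fun x hx => by rw [hz x hx]; norm_num : EqOn _ (fun _ => (0:ℝ)) (Iic a))]
      exact integral_zero _ _
    rw [h0, zero_add] at hsplit
    rw [hsplit, hI2]
  have e12 : ∫ x in Ioi a, Fk γ 0 (a+b) x * Fk γ a (a+b+c) x = M * CC γ := by
    have hsplit := intervalIntegral.integral_Iic_add_Ioi (b := a) i12.integrableOn i12.integrableOn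
    have h0 : ∫ x in Iic a, Fk γ 0 (a+b) x * Fk γ a (a+b+c) x = 0 := by
      rw [setIntegral_congr_fun measurableSet_Iic
        (fun x hx => by rw [hz x hx]; norm_num : EqOn _ (fun _ => (0:ℝ)) (Iic a))]
      exact integral_zero _ _
    rw [h0, zero_add] at hsplit
    rw [hsplit, hI12]
  have hval : ∫ x in Ioc 0 a, Fk γ 0 (a+b) x ^ 2 = a^(2*γ+1)/(2*γ+1) := by
    have hcg : EqOn (fun x => Fk γ 0 (a+b) x ^ 2) (fun x => x^(2*γ)) (Ioc 0 a) := by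
      intro x hx
      have h1 : Fk γ 0 (a+b) x = x ^ γ := by
        unfold Fk
        rw [sub_zero, max_eq_left hx.1.le,
          max_eq_right (by linarith [hx.2] : x - (a+b) ≤ 0), Real.zero_rpow hγ.ne', sub_zero]
      simp only [h1, sq_rpow hx.1.le]
    rw [setIntegral_congr_fun measurableSet_Ioc hcg, ← intervalIntegral.integral_of_le ha.le,
      integral_rpow (Or.inl (by linarith : (-1:ℝ) < 2*γ)),
      Real.zero_rpow (by positivity : 2*γ+1 ≠ 0)]
    norm_num
  have e1le : ∫ x in Ioi a, Fk γ 0 (a+b) x ^ 2 ≤ A * CC γ - a^(2*γ+1)/(2*γ+1) := by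
    have hsplit := intervalIntegral.integral_Iic_add_Ioi (b := a) i1.integrableOn i1.integrableOn
    have hmono : ∫ x in Ioc 0 a, Fk γ 0 (a+b) x ^ 2 ≤ ∫ x in Iic a, Fk γ 0 (a+b) x ^ 2 :=
      setIntegral_mono_set i1.integrableOn
        (Filter.Eventually.of_forall fun x => sq_nonneg _)
        (HasSubset.Subset.eventuallyLE Ioc_subset_Iic_self)
    rw [hI1] at hsplit
    rw [hval] at hmono
    linarith
  set l := M / B with hl
  have hquad : (0:ℝ) ≤ ∫ x in Ioi a, (Fk γ 0 (a+b) x - l * Fk γ a (a+b+c) x)^2 :=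
    integral_nonneg fun x => sq_nonneg _
  have hexp : ∫ x in Ioi a, (Fk γ 0 (a+b) x - l * Fk γ a (a+b+c) x)^2
      = (∫ x in Ioi a, Fk γ 0 (a+b) x ^ 2)
        - 2*l*(∫ x in Ioi a, Fk γ 0 (a+b) x * Fk γ a (a+b+c) x)
        + l^2 * ∫ x in Ioi a, Fk γ a (a+b+c) x ^ 2 := by
    have hpt : (fun x => (Fk γ 0 (a+b) x - l * Fk γ a (a+b+c) x)^2)
        = fun x => (Fk γ 0 (a+b) x ^ 2 - (2*l) * (Fk γ 0 (a+b) x * Fk γ a (a+b+c) x))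
            + l^2 * Fk γ a (a+b+c) x ^ 2 := by
      funext x; ring
    have ii1 : IntegrableOn (fun x => Fk γ 0 (a+b) x ^ 2
        - (2*l) * (Fk γ 0 (a+b) x * Fk γ a (a+b+c) x)) (Ioi a) :=
      i1.integrableOn.sub (i12.integrableOn.const_mul _)
    rw [hpt, integral_add ii1 (i2.integrableOn.const_mul _),
      integral_sub i1.integrableOn (i12.integrableOn.const_mul _),
      integral_const_mul, integral_const_mul]
  rw [hexp, e12, e2] at hquad
  have final2 : M^2 * CC γ / B ≤ A * CC γ - a^(2*γ+1)/(2*γ+1) := by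
    have hid : 2*l*(M * CC γ) - l^2*(B * CC γ) = M^2 * CC γ / B := by
      rw [hl]; field_simp; ring
    linarith
  have hstep := mul_le_mul_of_nonneg_right final2 (div_pos hBpos hC).le
  have hL : M^2 * CC γ / B * (B / CC γ) = M^2 := by field_simp
  have hR : (A * CC γ - a^(2*γ+1)/(2*γ+1)) * (B / CC γ)
      = A*B - B*a^(2*γ+1)/((2*γ+1)*CC γ) := by field_simp
  rw [hL, hR] at hstep
  have hrw : 1/((2*γ+1)*CC γ)*(B*a^(2*γ+1)) = B*a^(2*γ+1)/((2*γ+1)*CC γ) := by ring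
  rw [hrw]
  linarith

end FBMLND4


open Real Set

/-- The covariance `𝔼[B_{u₁}(B_{x+u₂} - B_x)]` of a fractional Brownian motion of
Hurst parameter `H`. -/
noncomputable def mu (H x u₁ u₂ : ℝ) : ℝ :=
  (1/2) * ((x + u₂) ^ (2*H) - x ^ (2*H) - |x + u₂ - u₁| ^ (2*H) + |x - u₁| ^ (2*H))

/-- Local non-determinism lower bound for the determinant of the covariance matrix of
`(B_{t₁} - B_{s₁}, B_{t₂} - B_{s₂})` in the regime `s₁ < s₂ < t₁ < t₂`, with
`a = s₂ - s₁`, `b = t₁ - s₂`, `c = t₂ - t₁`. -/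
theorem det_cov_lower_bound_interlaced (H : ℝ) (hH : H ∈ Ioo (2/3 : ℝ) 1) :
    ∃ δ ∈ Ioo (0 : ℝ) 1, ∀ a b c : ℝ, 0 < a → 0 < b → 0 < c →
      (a + b) ^ (2*H) * (b + c) ^ (2*H) - mu H a (a + b) (b + c) ^ 2 ≥
        δ * ((a + b) ^ (2*H) * c ^ (2*H) + (b + c) ^ (2*H) * a ^ (2*H)) := by
  obtain ⟨hH1, hH2⟩ := hH
  set γ := H - 1/2 with hγdef
  have hγ : 0 < γ := by simp only [hγdef]; linarith
  have hγ2 : γ < 1/2 := by simp only [hγdef]; linarith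
  have hC : 0 < FBMLND.CC γ := FBMLND3.CC_pos hγ hγ2
  have hα : 2*γ+1 = 2*H := by simp only [hγdef]; ring
  have h2H : (0:ℝ) < 2*H := by linarith
  have hCge : 1/(2*H) ≤ FBMLND.CC γ := by
    have := FBMLND3.CC_ge hγ hγ2
    rwa [hα] at this
  have hone : 1 ≤ 2*H*FBMLND.CC γ := by
    have := (div_le_iff₀ h2H).mp hCge
    linarith [mul_comm (FBMLND.CC γ) (2*H) ▸ this]
  refine ⟨1/(2*(2*H*FBMLND.CC γ)), ⟨one_div_pos.mpr (by nlinarith [mul_pos h2H hC]), ?_⟩, ?_⟩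
  · rw [div_lt_one (by nlinarith [mul_pos h2H hC])]
    linarith
  · intro a b c ha hb hc
    have key1 := FBMLND4.core hγ hγ2 ha hb hc
    have key2 := FBMLND4.core hγ hγ2 hc hb ha
    rw [hα] at key1 key2
    rw [show c+b+a = a+b+c by ring, show c+b = b+c by ring, show b+a = a+b by ring,
      show (1/2) * ((a+b+c)^(2*H) + b^(2*H) - c^(2*H) - a^(2*H))
        = (1/2) * ((a+b+c)^(2*H) + b^(2*H) - a^(2*H) - c^(2*H)) by ring,
      mul_comm ((b+c)^(2*H)) ((a+b)^(2*H))] at key2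
    have hmu : mu H a (a+b) (b+c)
        = (1/2) * ((a+b+c)^(2*H) + b^(2*H) - a^(2*H) - c^(2*H)) := by
      unfold mu
      rw [show a + (b+c) = a+b+c by ring, show a+b+c - (a+b) = c by ring,
        show a - (a+b) = -b by ring, abs_neg, abs_of_pos hb, abs_of_pos hc]
      ring
    rw [ge_iff_le, hmu]
    have hsplit : 1/(2*(2*H*FBMLND.CC γ))
          * ((a+b)^(2*H) * c^(2*H) + (b+c)^(2*H) * a^(2*H))
        = (1/(2*H*FBMLND.CC γ) * ((a+b)^(2*H) * c^(2*H)))/2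
          + (1/(2*H*FBMLND.CC γ) * ((b+c)^(2*H) * a^(2*H)))/2 := by
      ring
    rw [hsplit]
    linarith
end

section
/- Let $H\in(\tfrac23,1)$ and let $q\ge1$ be an integer. There exists a constant $K>0$, depending only on $H$ and $q$, such that for all $x>0$ and all $0<v_1\le w_1$, $0<v_2\le w_2$ with $w_1-v_1\le1$ and $w_2-v_2\le1$, one has $G^{(q)}_{1,x}(v_1,v_2) \le K\, G^{(q)}_{1,x}(w_1,w_2)$. -/
open Real Set

lemma convexOn_abs_rpow {p : ℝ} (hp : 1 ≤ p) :
    ConvexOn ℝ univ (fun t : ℝ => |t| ^ p) := by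
  refine ⟨convex_univ, ?_⟩
  intro x _ y _ a b ha hb hab
  have h1 : |a • x + b • y| ^ p ≤ (a * |x| + b * |y|) ^ p := by
    apply Real.rpow_le_rpow (abs_nonneg _) _ (le_trans zero_le_one hp)
    calc |a • x + b • y| ≤ |a • x| + |b • y| := abs_add_le _ _
      _ = a * |x| + b * |y| := by
          simp [abs_mul, abs_of_nonneg ha, abs_of_nonneg hb, smul_eq_mul]
  refine h1.trans ?_
  have := (convexOn_rpow hp).2 (abs_nonneg x) (abs_nonneg y) ha hb hab
  simpa [smul_eq_mul] using this

lemma four_point {f : ℝ → ℝ} (hf : ConvexOn ℝ univ f) {a b h : ℝ}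
    (hab : a ≤ b) (hh : 0 ≤ h) : f (a + h) - f a ≤ f (b + h) - f b := by
  rcases eq_or_lt_of_le (by linarith : a ≤ b + h) with he | hlt
  · have hb' : b = a := by linarith
    have hh' : h = 0 := by linarith
    simp [hb', hh']
  · set s := b + h - a with hs
    have hs0 : 0 < s := by linarith
    set μ := h / s with hμ
    set lam := (b - a) / s with hlam
    have hμ0 : 0 ≤ μ := div_nonneg hh hs0.le
    have hlam0 : 0 ≤ lam := div_nonneg (by linarith) hs0.le
    have hsum : μ + lam = 1 := by rw [hμ, hlam, ← add_div, div_eq_one_iff_eq hs0.ne', hs]; ring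
    have h1 : f (μ • a + lam • (b + h)) ≤ μ * f a + lam * f (b + h) :=
      hf.2 (mem_univ a) (mem_univ (b + h)) hμ0 hlam0 hsum
    have h2 : f (lam • a + μ • (b + h)) ≤ lam * f a + μ * f (b + h) :=
      hf.2 (mem_univ a) (mem_univ (b + h)) hlam0 hμ0 (by linarith)
    have e1 : μ • a + lam • (b + h) = b := by
      have : μ * a + lam * (b + h) = b := by
        rw [hμ, hlam, div_mul_eq_mul_div, div_mul_eq_mul_div, ← add_div, div_eq_iff hs0.ne', hs]; ring
      simpa [smul_eq_mul] using this
    have e2 : lam • a + μ • (b + h) = a + h := by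
      have : lam * a + μ * (b + h) = a + h := by
        rw [hμ, hlam, div_mul_eq_mul_div, div_mul_eq_mul_div, ← add_div, div_eq_iff hs0.ne', hs]; ring
      simpa [smul_eq_mul] using this
    rw [e1] at h1; rw [e2] at h2
    have hl : lam = 1 - μ := by linarith
    rw [hl] at h1 h2
    nlinarith [h1, h2]

lemma mu_eq (H x u₁ u₂ : ℝ) (hx : 0 ≤ x) (hu₂ : 0 ≤ u₂) :
    mu H x u₁ u₂ = (1/2) * (|x + u₂| ^ (2*H) - |x| ^ (2*H)
      - |x + u₂ - u₁| ^ (2*H) + |x - u₁| ^ (2*H)) := by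
  rw [mu, abs_of_nonneg (by linarith : (0:ℝ) ≤ x + u₂), abs_of_nonneg hx]

lemma mu_nonneg {H : ℝ} (hH : 1 ≤ 2*H) {x u₁ u₂ : ℝ}
    (hx : 0 ≤ x) (hu₁ : 0 ≤ u₁) (hu₂ : 0 ≤ u₂) : 0 ≤ mu H x u₁ u₂ := by
  rw [mu_eq H x u₁ u₂ hx hu₂]
  have h := four_point (convexOn_abs_rpow hH) (a := x - u₁) (b := x) (h := u₂)
    (by linarith) hu₂
  have e : x - u₁ + u₂ = x + u₂ - u₁ := by ring
  rw [e] at h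
  linarith

lemma mu_mono₁ {H : ℝ} (hH : 1 ≤ 2*H) {x v₁ w₁ u₂ : ℝ}
    (hx : 0 ≤ x) (hv : v₁ ≤ w₁) (hu₂ : 0 ≤ u₂) :
    mu H x v₁ u₂ ≤ mu H x w₁ u₂ := by
  rw [mu_eq H x v₁ u₂ hx hu₂, mu_eq H x w₁ u₂ hx hu₂]
  have h := four_point (convexOn_abs_rpow hH) (a := x - w₁) (b := x - v₁) (h := u₂)
    (by linarith) hu₂
  have e1 : x - w₁ + u₂ = x + u₂ - w₁ := by ring
  have e2 : x - v₁ + u₂ = x + u₂ - v₁ := by ring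
  rw [e1, e2] at h
  linarith

lemma mu_mono₂ {H : ℝ} (hH : 1 ≤ 2*H) {x u₁ v₂ w₂ : ℝ}
    (hx : 0 ≤ x) (hu₁ : 0 ≤ u₁) (hv₂ : 0 ≤ v₂) (hv : v₂ ≤ w₂) :
    mu H x u₁ v₂ ≤ mu H x u₁ w₂ := by
  rw [mu_eq H x u₁ v₂ hx hv₂, mu_eq H x u₁ w₂ hx (by linarith)]
  have h := four_point (convexOn_abs_rpow hH) (a := x - u₁ + v₂) (b := x + v₂)
    (h := w₂ - v₂) (by linarith) (by linarith)
  have e1 : x - u₁ + v₂ + (w₂ - v₂) = x + w₂ - u₁ := by ring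
  have e2 : x + v₂ + (w₂ - v₂) = x + w₂ := by ring
  have e3 : x - u₁ + v₂ = x + v₂ - u₁ := by ring
  rw [e1, e2, e3] at h
  linarith

/-- The kernel `G^{(q)}_{ε,x}(u₁,u₂) = (ε + u₁^{2H})^{-1/2-q} (ε + u₂^{2H})^{-1/2-q}
μ_H(x,u₁,u₂)^{2q-1}`. -/
noncomputable def G (H : ℝ) (q : ℕ) (ε x u₁ u₂ : ℝ) : ℝ :=
  (ε + u₁ ^ (2*H)) ^ (-(1/2 : ℝ) - (q : ℝ)) * (ε + u₂ ^ (2*H)) ^ (-(1/2 : ℝ) - (q : ℝ)) *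
    mu H x u₁ u₂ ^ (2*q - 1)

lemma prefactor_bound {H : ℝ} (hH1 : 0 ≤ 2*H) (hH2 : 2*H ≤ 2) (q : ℕ) {v w : ℝ}
    (hv : 0 < v) (hvw : v ≤ w) (hwv : w - v ≤ 1) :
    (1 + v ^ (2*H)) ^ (-(1/2 : ℝ) - (q : ℝ)) ≤
      (5:ℝ) ^ ((1/2 : ℝ) + (q : ℝ)) * (1 + w ^ (2*H)) ^ (-(1/2 : ℝ) - (q : ℝ)) := by
  set p : ℝ := (1/2 : ℝ) + (q : ℝ) with hp
  have hp0 : 0 < p := by rw [hp]; positivity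
  have hA : (0:ℝ) < 1 + v ^ (2*H) := by positivity
  have hw0 : 0 ≤ w := by linarith
  have hB : (0:ℝ) < 1 + w ^ (2*H) := by
    have := rpow_nonneg hw0 (2*H); linarith
  -- bound 1 + w^(2H) ≤ 5 * (1 + v^(2H))
  have h4 : (2:ℝ) ^ (2*H) ≤ 4 := by
    calc (2:ℝ) ^ (2*H) ≤ (2:ℝ) ^ (2:ℝ) := by
          exact rpow_le_rpow_of_exponent_le one_le_two hH2
      _ = 4 := by
          rw [show (2:ℝ) = ((2:ℕ):ℝ) from by norm_num, rpow_natCast]; norm_num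
  have hwp : w ^ (2*H) ≤ 4 * (v ^ (2*H) + 1) := by
    have h1 : w ^ (2*H) ≤ (v + 1) ^ (2*H) :=
      rpow_le_rpow hw0 (by linarith) hH1
    rcases le_total v 1 with hv1 | hv1
    · have h2 : (v + 1) ^ (2*H) ≤ (2:ℝ) ^ (2*H) :=
        rpow_le_rpow (by linarith) (by linarith) hH1
      have : (0:ℝ) ≤ v ^ (2*H) := by positivity
      linarith
    · have h2 : (v + 1) ^ (2*H) ≤ (2*v) ^ (2*H) :=
        rpow_le_rpow (by linarith) (by linarith) hH1
      have h3 : (2*v) ^ (2*H) = (2:ℝ) ^ (2*H) * v ^ (2*H) :=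
        mul_rpow (by norm_num) hv.le
      have hv2 : (0:ℝ) ≤ v ^ (2*H) := by positivity
      nlinarith
  have hBA : 1 + w ^ (2*H) ≤ 5 * (1 + v ^ (2*H)) := by
    have : (0:ℝ) ≤ v ^ (2*H) := by positivity
    linarith
  -- conclude
  have hneg : -(1/2 : ℝ) - (q : ℝ) = -p := by rw [hp]; ring
  rw [hneg, rpow_neg hA.le, rpow_neg hB.le]
  have hBp : (1 + w ^ (2*H)) ^ p ≤ 5 ^ p * (1 + v ^ (2*H)) ^ p := by
    rw [← mul_rpow (by norm_num) hA.le]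
    exact rpow_le_rpow hB.le hBA hp0.le
  rw [← div_eq_mul_inv, le_div_iff₀ (rpow_pos_of_pos hB p)]
  have hApos := rpow_pos_of_pos hA p
  calc ((1 + v ^ (2*H)) ^ p)⁻¹ * (1 + w ^ (2*H)) ^ p
      ≤ ((1 + v ^ (2*H)) ^ p)⁻¹ * (5 ^ p * (1 + v ^ (2*H)) ^ p) := by
        exact mul_le_mul_of_nonneg_left hBp (by positivity)
    _ = 5 ^ p := by field_simp

/-- There is a constant `K`, depending only on `H` and `q`, such that
`G^{(q)}_{1,x}(v₁,v₂) ≤ K G^{(q)}_{1,x}(w₁,w₂)` whenever `0 < vᵢ ≤ wᵢ` and `wᵢ - vᵢ ≤ 1`. -/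
theorem G_comparison (H : ℝ) (hH : H ∈ Ioo (2/3 : ℝ) 1) (q : ℕ) (hq : 1 ≤ q) :
    ∃ K > (0 : ℝ), ∀ x v₁ v₂ w₁ w₂ : ℝ, 0 < x →
      0 < v₁ → v₁ ≤ w₁ → 0 < v₂ → v₂ ≤ w₂ → w₁ - v₁ ≤ 1 → w₂ - v₂ ≤ 1 →
      G H q 1 x v₁ v₂ ≤ K * G H q 1 x w₁ w₂ := by
  obtain ⟨hH1, hH2⟩ := hH
  have h1 : 1 ≤ 2*H := by linarith
  have h0 : 0 ≤ 2*H := by linarith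
  have h2 : 2*H ≤ 2 := by linarith
  set c : ℝ := (5:ℝ) ^ ((1/2 : ℝ) + (q : ℝ)) with hc
  have hc0 : 0 < c := rpow_pos_of_pos (by norm_num) _
  refine ⟨c * c, by positivity, ?_⟩
  intro x v₁ v₂ w₁ w₂ hx hv₁ hvw₁ hv₂ hvw₂ hd₁ hd₂
  have hA := prefactor_bound h0 h2 q hv₁ hvw₁ hd₁
  have hB := prefactor_bound h0 h2 q hv₂ hvw₂ hd₂
  have hmuv : 0 ≤ mu H x v₁ v₂ := mu_nonneg h1 hx.le hv₁.le hv₂.le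
  have hmu : mu H x v₁ v₂ ≤ mu H x w₁ w₂ :=
    (mu_mono₁ h1 hx.le hvw₁ hv₂.le).trans
      (mu_mono₂ h1 hx.le (by linarith) hv₂.le hvw₂)
  have hM : mu H x v₁ v₂ ^ (2*q - 1) ≤ mu H x w₁ w₂ ^ (2*q - 1) :=
    pow_le_pow_left₀ hmuv hmu _
  have hMv : 0 ≤ mu H x v₁ v₂ ^ (2*q - 1) := pow_nonneg hmuv _
  have hAv : (0:ℝ) ≤ (1 + v₁ ^ (2*H)) ^ (-(1/2 : ℝ) - (q : ℝ)) :=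
    rpow_nonneg (by positivity) _
  have hBv : (0:ℝ) ≤ (1 + v₂ ^ (2*H)) ^ (-(1/2 : ℝ) - (q : ℝ)) :=
    rpow_nonneg (by positivity) _
  have hAw : (0:ℝ) ≤ (1 + w₁ ^ (2*H)) ^ (-(1/2 : ℝ) - (q : ℝ)) :=
    rpow_nonneg (by have := rpow_nonneg (show (0:ℝ) ≤ w₁ by linarith) (2*H); linarith) _
  have hBw : (0:ℝ) ≤ (1 + w₂ ^ (2*H)) ^ (-(1/2 : ℝ) - (q : ℝ)) :=
    rpow_nonneg (by have := rpow_nonneg (show (0:ℝ) ≤ w₂ by linarith) (2*H); linarith) _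
  have key : (1 + v₁ ^ (2*H)) ^ (-(1/2 : ℝ) - (q : ℝ)) *
      (1 + v₂ ^ (2*H)) ^ (-(1/2 : ℝ) - (q : ℝ)) * mu H x v₁ v₂ ^ (2*q - 1) ≤
      (c * (1 + w₁ ^ (2*H)) ^ (-(1/2 : ℝ) - (q : ℝ))) *
      (c * (1 + w₂ ^ (2*H)) ^ (-(1/2 : ℝ) - (q : ℝ))) * mu H x w₁ w₂ ^ (2*q - 1) :=
    mul_le_mul (mul_le_mul hA hB hBv (by positivity)) hM hMv (by positivity)
  calc G H q 1 x v₁ v₂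
      = (1 + v₁ ^ (2*H)) ^ (-(1/2 : ℝ) - (q : ℝ)) *
        (1 + v₂ ^ (2*H)) ^ (-(1/2 : ℝ) - (q : ℝ)) * mu H x v₁ v₂ ^ (2*q - 1) := rfl
    _ ≤ (c * (1 + w₁ ^ (2*H)) ^ (-(1/2 : ℝ) - (q : ℝ))) *
        (c * (1 + w₂ ^ (2*H)) ^ (-(1/2 : ℝ) - (q : ℝ))) * mu H x w₁ w₂ ^ (2*q - 1) := key
    _ = c * c * G H q 1 x w₁ w₂ := by rw [G]; ring
end

section
/- Let $H\in(\tfrac12,1)$. For all $x,z\ge0$ and $y>0$, $\tfrac12\big((x+y+z)^{2H}+y^{2H}-(x+y)^{2H}-(y+z)^{2H}\big) \le H(2H-1)\,x\,z\,y^{2H-2}$. (The left-hand side equals $\mu_H(x+y,\,x,\,z) = \mathbb{E}[B_x(B_{x+y+z}-B_{x+y})]$, the covariance of two fractional Brownian increments separated by a gap of length $y$.) -/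
open Real Set

lemma mvt_le {f f' : ℝ → ℝ} {c C : ℝ} (hc : 0 ≤ c)
    (hd : ∀ t ∈ Icc (0:ℝ) c, HasDerivAt f (f' t) t)
    (h0 : ∀ t ∈ Icc (0:ℝ) c, 0 ≤ f' t)
    (h1 : ∀ t ∈ Icc (0:ℝ) c, f' t ≤ C) : f c - f 0 ≤ C * c := by
  have h := norm_image_sub_le_of_norm_deriv_le_segment'
    (fun t ht => (hd t ht).hasDerivWithinAt)
    (f := f) (C := C)
    (fun t ht => by
      have ht' : t ∈ Icc (0:ℝ) c := ⟨ht.1, ht.2.le⟩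
      rw [Real.norm_eq_abs, abs_of_nonneg (h0 t ht')]; exact h1 t ht')
    c (right_mem_Icc.2 hc)
  calc f c - f 0 ≤ ‖f c - f 0‖ := le_abs_self _
    _ ≤ C * (c - 0) := h
    _ = C * c := by ring

lemma hasDerivAt_shift_rpow (b p t : ℝ) (h : 0 < b + t) :
    HasDerivAt (fun s => (b + s) ^ p) (p * (b + t) ^ (p - 1)) t := by
  have h1 : HasDerivAt (fun s : ℝ => b + s) 1 t := (hasDerivAt_id t).const_add b
  have h2 := (Real.hasDerivAt_rpow_const (p := p) (Or.inl h.ne')).comp t h1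
  simpa [Function.comp_def] using h2

lemma rpow_diff_le {p a c : ℝ} (hp : 0 < p) (hp1 : p ≤ 1) (ha : 0 < a) (hc : 0 ≤ c)
    (b : ℝ) (hab : a ≤ b) : (b + c) ^ p - b ^ p ≤ p * a ^ (p - 1) * c := by
  have hb : 0 < b := ha.trans_le hab
  have := mvt_le (f := fun s => (b + s) ^ p) (f' := fun t => p * (b + t) ^ (p - 1))
    (c := c) (C := p * a ^ (p - 1)) hc
    (fun t ht => hasDerivAt_shift_rpow b p t (by linarith [ht.1]))
    (fun t ht => mul_nonneg hp.le (Real.rpow_nonneg (by linarith [ht.1]) _))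
    (fun t ht => by
      have hbt : 0 < b + t := by linarith [ht.1]
      have : (b + t) ^ (p - 1) ≤ a ^ (p - 1) :=
        Real.rpow_le_rpow_of_nonpos ha (by linarith [ht.1]) (by linarith)
      exact mul_le_mul_of_nonneg_left this hp.le)
  simpa using this

/-- For `H ∈ (1/2,1)`, `x,z ≥ 0` and `y > 0`,
`((x+y+z)^{2H} + y^{2H} - (x+y)^{2H} - (y+z)^{2H})/2 ≤ H(2H-1) x z y^{2H-2}`; the left-hand
side is the covariance `μ_H(x+y, x, z)` of two fractional Brownian increments separated
by a gap of length `y`. -/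
theorem mu_gap_bound (H : ℝ) (hH : H ∈ Ioo (1/2 : ℝ) 1) (x z y : ℝ)
    (hx : 0 ≤ x) (hz : 0 ≤ z) (hy : 0 < y) :
    (1/2) * ((x + y + z) ^ (2*H) + y ^ (2*H) - (x + y) ^ (2*H) - (y + z) ^ (2*H)) ≤
      H * (2*H - 1) * x * z * y ^ (2*H - 2) := by
  obtain ⟨hH1, hH2⟩ := hH
  have hp : 0 < 2*H - 1 := by linarith
  have hp1 : 2*H - 1 ≤ 1 := by linarith
  set g : ℝ → ℝ := fun t => (x + y + t) ^ (2*H) - (y + t) ^ (2*H) with hg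
  have key : g z - g 0 ≤ (2*H * ((2*H - 1) * y ^ (2*H - 2) * x)) * z := by
    refine mvt_le hz (f' := fun t => 2*H * (x + y + t) ^ (2*H - 1) - 2*H * (y + t) ^ (2*H - 1))
      (fun t ht => ?_) (fun t ht => ?_) (fun t ht => ?_)
    · exact (hasDerivAt_shift_rpow (x+y) (2*H) t (by linarith [ht.1])).sub
        (hasDerivAt_shift_rpow y (2*H) t (by linarith [ht.1]))
    · have h1 : (y + t) ^ (2*H - 1) ≤ (x + y + t) ^ (2*H - 1) :=
        Real.rpow_le_rpow (by linarith [ht.1]) (by linarith) (by linarith)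
      have h2H : (0:ℝ) ≤ 2*H := by linarith
      nlinarith
    · have h1 : (x + y + t) ^ (2*H - 1) - (y + t) ^ (2*H - 1) ≤
          (2*H - 1) * y ^ ((2*H - 1) - 1) * x := by
        have := rpow_diff_le hp hp1 hy hx (y + t) (by linarith [ht.1])
        have he : y + t + x = x + y + t := by ring
        rwa [he] at this
      have he2 : (2*H - 1) - 1 = 2*H - 2 := by ring
      rw [he2] at h1
      have h2H : (0:ℝ) ≤ 2*H := by linarith
      nlinarith
  have hgz : g z - g 0 = (x + y + z) ^ (2*H) - (y + z) ^ (2*H) - (x + y) ^ (2*H) + y ^ (2*H) := by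
    simp only [hg]; ring
  rw [hgz] at key
  nlinarith [key]
end

section
/- Let $H\in(\tfrac12,1)$. For all $x,z>0$ and $y\ge0$, $\tfrac12\big((x+y+z)^{2H}+y^{2H}-(x+y)^{2H}-(y+z)^{2H}\big) \le H\,\min(x,z)\,\max(x,z)^{2H-1}$. (The left-hand side equals $\mu_H(x+y,\,x,\,z) = \mathbb{E}[B_x(B_{x+y+z}-B_{x+y})]$, the covariance of two fractional Brownian increments separated by a gap of length $y$.) -/
open Real Set

lemma rpow_subadd (a b p : ℝ) (ha : 0 ≤ a) (hb : 0 ≤ b) (hp : 0 ≤ p) (hp1 : p ≤ 1) :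
    (a + b) ^ p ≤ a ^ p + b ^ p := by
  have h := NNReal.rpow_add_le_add_rpow (⟨a, ha⟩ : NNReal) ⟨b, hb⟩ hp hp1
  have h2 := NNReal.coe_le_coe.2 h
  exact Real.rpow_add_le_add_rpow ha hb hp hp1

/-- Key one-sided bound: `ψ(y) ≤ 2H·x·z^(2H-1)`. -/
lemma mu_gap_key (H : ℝ) (hH : H ∈ Ioo (1/2 : ℝ) 1) (x z y : ℝ)
    (hx : 0 < x) (hz : 0 < z) (hy : 0 ≤ y) :
    (x + y + z) ^ (2*H) + y ^ (2*H) - (x + y) ^ (2*H) - (y + z) ^ (2*H) ≤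
      2 * H * x * z ^ (2*H - 1) := by
  obtain ⟨hH1, hH2⟩ := hH
  have h1 : (1:ℝ) ≤ 2 * H := by linarith
  set G : ℝ → ℝ := fun s => (s + z) ^ (2*H) - s ^ (2*H) - 2*H*z^(2*H-1)*s with hG
  have hant : AntitoneOn G (Ici (0:ℝ)) := by
    apply antitoneOn_of_deriv_nonpos (convex_Ici 0)
    · apply Continuous.continuousOn
      apply Continuous.sub
      apply Continuous.sub
      · exact (continuous_id.add continuous_const).rpow_const (fun s => Or.inr (by linarith))
      · exact continuous_id.rpow_const (fun s => Or.inr (by linarith))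
      · exact continuous_const.mul continuous_id
    · apply Differentiable.differentiableOn
      apply Differentiable.sub
      apply Differentiable.sub
      · exact (differentiable_id.add_const z).rpow_const (fun s => Or.inr (by linarith))
      · exact differentiable_id.rpow_const (fun s => Or.inr (by linarith))
      · exact (differentiable_const _).mul differentiable_id
    · intro s hs
      rw [interior_Ici] at hs
      have hs0 : 0 < s := hs
      have hd : HasDerivAt G
          (1 * (2*H) * (s + z) ^ (2*H - 1) - 1 * (2*H) * s ^ (2*H - 1)
            - 2*H*z^(2*H-1)) s := by
        apply HasDerivAt.sub
        apply HasDerivAt.sub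
        · exact ((hasDerivAt_id s).add_const z).rpow_const (Or.inr h1)
        · exact (hasDerivAt_id s).rpow_const (Or.inr h1)
        · simpa using (hasDerivAt_id s).const_mul (2*H*z^(2*H-1))
      rw [hd.deriv]
      have hsub : (s + z) ^ (2*H - 1) ≤ s ^ (2*H - 1) + z ^ (2*H - 1) :=
        rpow_subadd s z (2*H-1) hs0.le hz.le (by linarith) (by linarith)
      nlinarith [hsub, hH1]
  have hGle : G (y + x) ≤ G y := hant (mem_Ici.2 hy) (mem_Ici.2 (by positivity)) (by linarith)
  have : (y + x + z) ^ (2*H) - (y + x) ^ (2*H) - 2*H*z^(2*H-1)*(y+x)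
      ≤ (y + z) ^ (2*H) - y ^ (2*H) - 2*H*z^(2*H-1)*y := hGle
  have hxy : x + y + z = y + x + z := by ring
  have hxy2 : x + y = y + x := by ring
  rw [hxy, hxy2]
  nlinarith [this]

/-- For `H ∈ (1/2,1)`, `x,z > 0` and `y ≥ 0`,
`((x+y+z)^{2H} + y^{2H} - (x+y)^{2H} - (y+z)^{2H})/2 ≤ H min(x,z) max(x,z)^{2H-1}`; the
left-hand side is the covariance `μ_H(x+y, x, z)` of two fractional Brownian increments
separated by a gap of length `y`. -/
theorem mu_gap_bound_minmax (H : ℝ) (hH : H ∈ Ioo (1/2 : ℝ) 1) (x z y : ℝ)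
    (hx : 0 < x) (hz : 0 < z) (hy : 0 ≤ y) :
    (1/2) * ((x + y + z) ^ (2*H) + y ^ (2*H) - (x + y) ^ (2*H) - (y + z) ^ (2*H)) ≤
      H * min x z * max x z ^ (2*H - 1) := by
  rcases le_total x z with h | h
  · rw [min_eq_left h, max_eq_right h]
    have := mu_gap_key H hH x z y hx hz hy
    linarith
  · rw [min_eq_right h, max_eq_left h]
    have := mu_gap_key H hH z x y hz hx hy
    have he : z + y + x = x + y + z := by ring
    have he2 : z + y = y + z := by ring
    have he3 : y + x = x + y := by ring
    rw [he, he2, he3] at this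
    linarith
end
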